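/- Lens theorem (increasing curvature): Let c > 0 and let f : ℝ → ℝ be twice continuously differentiable on [−c, c] with f(−c) = f(c) = 0, and suppose the signed curvature κ(x) = f''(x)/(1 + f'(x)^2)^(3/2) is strictly increasing on [−c, c]. Then for every x with |x| < c, A(x; c, −β) < f(x) < A(x; c, α), where α = arctan(f'(−c)) and β = arctan(f'(c)). -/

import Mathlib

/-- Signed curvature of the graph of `f` at abscissa `x`:
`κ(x) = f''(x) / (1 + f'(x)^2)^(3/2)`. -/
noncomputable def graphCurvature (f : ℝ → ℝ) (x : ℝ) : ℝ :=
  deriv (deriv f) x / (1 + deriv f x ^ 2) ^ ((3 : ℝ) / 2)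

/-- The circular arc from `(−c, 0)` to `(c, 0)` whose tangent at `(−c, 0)`
makes angle `φ` with the positive `x`-axis, as a function of `x`. -/
noncomputable def arcA (c φ x : ℝ) : ℝ :=
  ((c ^ 2 - x ^ 2) * Real.sin φ) /
    (c * Real.cos φ + Real.sqrt (c ^ 2 - x ^ 2 * Real.sin φ ^ 2))

section LensAux
open Set Real Filter Topology

private lemma rpow32_pos {t : ℝ} (h : 0 < t) : 0 < t ^ ((3:ℝ)/2) := Real.rpow_pos_of_pos h _

private lemma one_add_sq_pos (u : ℝ) : 0 < 1 + u ^ 2 := by positivity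

lemma lens_core (c : ℝ) (hc : 0 < c) (f G G' G'' : ℝ → ℝ) (K : ℝ)
    (hf : ContDiffOn ℝ 2 f (Set.Icc (-c) c))
    (hGd : ∀ x ∈ Set.Icc (-c) c, HasDerivAt G (G' x) x)
    (hGd2 : ∀ x ∈ Set.Icc (-c) c, HasDerivAt G' (G'' x) x)
    (hGK : ∀ x ∈ Set.Icc (-c) c, G'' x = K * (1 + G' x ^ 2) ^ ((3:ℝ)/2))
    (hl : f (-c) = G (-c)) (hr : f c = G c)
    (hT : derivWithin f (Set.Icc (-c) c) (-c) = G' (-c))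
    (hmono : StrictMonoOn (graphCurvature f) (Set.Ioo (-c) c)) :
    ∀ x ∈ Set.Ioo (-c) c, f x < G x := by
  have hcc : -c < c := by linarith
  set s : Set ℝ := Set.Icc (-c) c with hsdef
  have hmcs : -c ∈ s := Set.left_mem_Icc.mpr hcc.le
  have hsU : UniqueDiffOn ℝ s := uniqueDiffOn_Icc hcc
  set f1 : ℝ → ℝ := derivWithin f s with hf1def
  set f2 : ℝ → ℝ := derivWithin f1 s with hf2def
  have hf1 : ContDiffOn ℝ 1 f1 s := hf.derivWithin hsU (by norm_num)
  have hf1c : ContinuousOn f1 s := hf1.continuousOn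
  have hf2cd : ContDiffOn ℝ 0 f2 s := hf1.derivWithin hsU (by norm_num)
  have hf2c : ContinuousOn f2 s := hf2cd.continuousOn
  have hfdiff : DifferentiableOn ℝ f s := hf.differentiableOn (by norm_num)
  have hf1diff : DifferentiableOn ℝ f1 s := hf1.differentiableOn (by norm_num)
  have hmem : ∀ x ∈ Set.Ioo (-c) c, s ∈ 𝓝 x := fun x hx => Icc_mem_nhds hx.1 hx.2
  have hD1 : ∀ x ∈ Set.Ioo (-c) c, HasDerivAt f (f1 x) x := by
    intro x hx
    have h := (hfdiff x (Ioo_subset_Icc_self hx)).differentiableAt (hmem x hx)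
    have h2 : derivWithin f s x = deriv f x := derivWithin_of_mem_nhds (hmem x hx)
    rw [hf1def, h2]; exact h.hasDerivAt
  have hD2 : ∀ x ∈ Set.Ioo (-c) c, HasDerivAt f1 (f2 x) x := by
    intro x hx
    have h := (hf1diff x (Ioo_subset_Icc_self hx)).differentiableAt (hmem x hx)
    have h2 : derivWithin f1 s x = deriv f1 x := derivWithin_of_mem_nhds (hmem x hx)
    rw [hf2def, h2]; exact h.hasDerivAt
  set κ : ℝ → ℝ := fun x => f2 x / (1 + f1 x ^ 2) ^ ((3:ℝ)/2) with hκdef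
  have hκc : ContinuousOn κ s := by
    apply hf2c.div
    · exact (continuousOn_const.add (hf1c.pow 2)).rpow_const
        (fun x hx => Or.inl (ne_of_gt (one_add_sq_pos (f1 x))))
    · intro x hx; exact ne_of_gt (rpow32_pos (one_add_sq_pos (f1 x)))
  have hκeq : ∀ x ∈ Set.Ioo (-c) c, graphCurvature f x = κ x := by
    intro x hx
    have h1 : deriv f x = f1 x := (derivWithin_of_mem_nhds (hmem x hx)).symm
    have h2 : deriv (deriv f) x = f2 x := by
      have he : deriv f =ᶠ[𝓝 x] f1 := by
        filter_upwards [Ioo_mem_nhds hx.1 hx.2] with y hy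
        exact (derivWithin_of_mem_nhds (hmem y hy)).symm
      rw [he.deriv_eq]; exact (derivWithin_of_mem_nhds (hmem x hx)).symm
    rw [graphCurvature, h1, h2]
  have hκmono : ∀ x ∈ Set.Ioo (-c) c, ∀ y ∈ Set.Ioo (-c) c, x < y → κ x < κ y := by
    intro x hx y hy hxy
    rw [← hκeq x hx, ← hκeq y hy]; exact hmono hx hy hxy
  have hκend : ∀ u ∈ Set.Ioo (-c) c, κ (-c) ≤ κ u := by
    intro u hu
    have hne : (𝓝[Set.Ioo (-c) u] (-c)).NeBot := by
      apply mem_closure_iff_nhdsWithin_neBot.mp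
      rw [closure_Ioo (ne_of_lt hu.1)]
      exact Set.left_mem_Icc.mpr hu.1.le
    have ht : Filter.Tendsto κ (𝓝[Set.Ioo (-c) u] (-c)) (𝓝 (κ (-c))) := by
      apply (hκc (-c) hmcs).mono_left
      apply nhdsWithin_mono
      intro t ht; exact ⟨ht.1.le, (ht.2.trans hu.2).le⟩
    apply le_of_tendsto ht
    filter_upwards [self_mem_nhdsWithin] with t ht2
    exact (hκmono t ⟨ht2.1, ht2.2.trans hu.2⟩ u hu ht2.2).le
  set w : ℝ → ℝ := fun x => f x - G x with hwdef
  set w1 : ℝ → ℝ := fun x => f1 x - G' x with hw1def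
  have hGc : ContinuousOn G s := fun x hx => (hGd x hx).continuousAt.continuousWithinAt
  have hwc : ContinuousOn w s := (hf.continuousOn).sub hGc
  have hwD : ∀ x ∈ Set.Ioo (-c) c, HasDerivAt w (w1 x) x :=
    fun x hx => (hD1 x hx).sub (hGd x (Ioo_subset_Icc_self hx))
  have hwD2 : ∀ x ∈ Set.Ioo (-c) c, HasDerivAt w1 (f2 x - G'' x) x :=
    fun x hx => (hD2 x hx).sub (hGd2 x (Ioo_subset_Icc_self hx))
  -- generic MVT step : if w1 < 0 on Ioo a u then w decreases there (and symmetric)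
  have mvt_neg : ∀ a ∈ Set.Ico (-c) c, ∀ u, a < u → u ≤ c →
      (∀ z ∈ Set.Ioo a u, w1 z < 0) → ∀ y ∈ Set.Ioo a u, w y < w a := by
    intro a ha u hau huc hneg y hy
    have hyc : y ≤ c := le_of_lt (lt_of_lt_of_le hy.2 huc)
    have hsubI : Set.Icc a y ⊆ s := Set.Icc_subset_Icc ha.1 hyc
    obtain ⟨ξ, hξ, hξeq⟩ := exists_hasDerivAt_eq_slope w w1 hy.1 (hwc.mono hsubI)
      (fun ξ hξ => hwD ξ ⟨lt_of_le_of_lt ha.1 hξ.1, lt_of_lt_of_le (lt_of_lt_of_le hξ.2 hyc) le_rfl⟩)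
    have hw1ξ : w1 ξ < 0 := hneg ξ ⟨hξ.1, lt_trans hξ.2 hy.2⟩
    rw [hξeq] at hw1ξ
    have h6 : 0 < y - a := by linarith [hy.1]
    have h7 := mul_neg_of_neg_of_pos hw1ξ h6
    rw [div_mul_cancel₀ _ (ne_of_gt h6)] at h7
    linarith
  have mvt_pos : ∀ a ∈ Set.Ico (-c) c, ∀ u, a < u → u ≤ c →
      (∀ z ∈ Set.Ioo a u, 0 < w1 z) → ∀ y ∈ Set.Ioo a u, w a < w y := by
    intro a ha u hau huc hpos y hy
    have hyc : y ≤ c := le_of_lt (lt_of_lt_of_le hy.2 huc)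
    have hsubI : Set.Icc a y ⊆ s := Set.Icc_subset_Icc ha.1 hyc
    obtain ⟨ξ, hξ, hξeq⟩ := exists_hasDerivAt_eq_slope w w1 hy.1 (hwc.mono hsubI)
      (fun ξ hξ => hwD ξ ⟨lt_of_le_of_lt ha.1 hξ.1, lt_of_lt_of_le hξ.2 hyc⟩)
    have hw1ξ : 0 < w1 ξ := hpos ξ ⟨hξ.1, lt_trans hξ.2 hy.2⟩
    rw [hξeq] at hw1ξ
    have h6 : 0 < y - a := by linarith [hy.1]
    have h7 := mul_pos hw1ξ h6
    rw [div_mul_cancel₀ _ (ne_of_gt h6)] at h7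
    linarith
  -- sign of w1 just to the right of an interior zero of w1 with nonzero second derivative
  have keypos : ∀ x ∈ Set.Ioo (-c) c, w1 x = 0 → 0 < f2 x - G'' x →
      ∃ u, x < u ∧ u ≤ c ∧ ∀ z ∈ Set.Ioo x u, 0 < w1 z := by
    intro x hx hz hW
    have hslope := (hwD2 x hx)
    rw [hasDerivAt_iff_tendsto_slope] at hslope
    have h1 : ∀ᶠ z in 𝓝[≠] x, 0 < slope w1 x z := hslope.eventually (lt_mem_nhds hW)
    have hmono2 : 𝓝[>] x ≤ 𝓝[≠] x :=
      nhdsWithin_mono x fun z hz2 => Set.mem_compl_singleton_iff.mpr (Set.mem_Ioi.mp hz2).ne'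
    have h2 : ∀ᶠ z in 𝓝[>] x, 0 < slope w1 x z := h1.filter_mono hmono2
    have h3 : ∀ᶠ z in 𝓝[>] x, 0 < w1 z := by
      filter_upwards [h2, self_mem_nhdsWithin] with z hz1 hz2
      rw [slope_def_field, hz, sub_zero] at hz1
      have hzx : 0 < z - x := by simp only [Set.mem_Ioi] at hz2; linarith
      have := mul_pos hz1 hzx
      rwa [div_mul_cancel₀ _ (ne_of_gt hzx)] at this
    obtain ⟨u, hu, hsub⟩ := mem_nhdsGT_iff_exists_Ioo_subset.mp h3
    refine ⟨min u c, lt_min hu hx.2, min_le_right _ _, ?_⟩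
    intro z hzI
    exact hsub ⟨hzI.1, lt_of_lt_of_le hzI.2 (min_le_left _ _)⟩
  have keyneg : ∀ x ∈ Set.Ioo (-c) c, w1 x = 0 → f2 x - G'' x < 0 →
      ∃ u, x < u ∧ u ≤ c ∧ ∀ z ∈ Set.Ioo x u, w1 z < 0 := by
    intro x hx hz hW
    have hslope := (hwD2 x hx)
    rw [hasDerivAt_iff_tendsto_slope] at hslope
    have h1 : ∀ᶠ z in 𝓝[≠] x, slope w1 x z < 0 := hslope.eventually (gt_mem_nhds hW)
    have hmono2 : 𝓝[>] x ≤ 𝓝[≠] x :=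
      nhdsWithin_mono x fun z hz2 => Set.mem_compl_singleton_iff.mpr (Set.mem_Ioi.mp hz2).ne'
    have h2 : ∀ᶠ z in 𝓝[>] x, slope w1 x z < 0 := h1.filter_mono hmono2
    have h3 : ∀ᶠ z in 𝓝[>] x, w1 z < 0 := by
      filter_upwards [h2, self_mem_nhdsWithin] with z hz1 hz2
      rw [slope_def_field, hz, sub_zero] at hz1
      have hzx : 0 < z - x := by simp only [Set.mem_Ioi] at hz2; linarith
      have := mul_neg_of_neg_of_pos hz1 hzx
      rwa [div_mul_cancel₀ _ (ne_of_gt hzx)] at this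
    obtain ⟨u, hu, hsub⟩ := mem_nhdsGT_iff_exists_Ioo_subset.mp h3
    refine ⟨min u c, lt_min hu hx.2, min_le_right _ _, ?_⟩
    intro z hzI
    exact hsub ⟨hzI.1, lt_of_lt_of_le hzI.2 (min_le_left _ _)⟩
  -- local max implies curvature ≤ K, local min implies ≥ K
  have LM1 : ∀ x ∈ Set.Ioo (-c) c, IsLocalMax w x → w1 x = 0 ∧ κ x ≤ K := by
    intro x hx hmax
    have hz : w1 x = 0 := hmax.hasDerivAt_eq_zero (hwD x hx)
    refine ⟨hz, ?_⟩
    by_contra hK; push_neg at hK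
    have hGx : G' x = f1 x := by
      have := sub_eq_zero.mp hz; linarith
    have hW : 0 < f2 x - G'' x := by
      have h2 : G'' x = K * (1 + f1 x ^ 2) ^ ((3:ℝ)/2) := by
        rw [hGK x (Ioo_subset_Icc_self hx), hGx]
      have h1 : f2 x = κ x * (1 + f1 x ^ 2) ^ ((3:ℝ)/2) := by
        rw [hκdef]; field_simp
      rw [h1, h2]
      nlinarith [rpow32_pos (one_add_sq_pos (f1 x))]
    obtain ⟨u, hxu, huc, hupos⟩ := keypos x hx hz hW
    have hev : ∀ᶠ y in 𝓝[>] x, w y ≤ w x := (hmax.filter_mono nhdsWithin_le_nhds)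
    obtain ⟨u2, hu2, hsub2⟩ := mem_nhdsGT_iff_exists_Ioo_subset.mp hev
    set y := (x + min u u2) / 2 with hy
    have hxmin : x < min u u2 := lt_min hxu hu2
    have hxy : x < y := by simp only [hy]; linarith
    have hyu : y < min u u2 := by simp only [hy]; linarith
    have hwxy : w x < w y := by
      apply mvt_pos x ⟨hx.1.le, hx.2⟩ u hxu huc hupos y
        ⟨hxy, lt_of_lt_of_le hyu (min_le_left _ _)⟩
    have : w y ≤ w x := hsub2 ⟨hxy, lt_of_lt_of_le hyu (min_le_right _ _)⟩
    linarith
  have LM2 : ∀ x ∈ Set.Ioo (-c) c, IsLocalMin w x → w1 x = 0 ∧ K ≤ κ x := by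
    intro x hx hmin
    have hz : w1 x = 0 := hmin.hasDerivAt_eq_zero (hwD x hx)
    refine ⟨hz, ?_⟩
    by_contra hK; push_neg at hK
    have hGx : G' x = f1 x := by
      have := sub_eq_zero.mp hz; linarith
    have hW : f2 x - G'' x < 0 := by
      have h2 : G'' x = K * (1 + f1 x ^ 2) ^ ((3:ℝ)/2) := by
        rw [hGK x (Ioo_subset_Icc_self hx), hGx]
      have h1 : f2 x = κ x * (1 + f1 x ^ 2) ^ ((3:ℝ)/2) := by
        rw [hκdef]; field_simp
      rw [h1, h2]
      nlinarith [rpow32_pos (one_add_sq_pos (f1 x))]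
    obtain ⟨u, hxu, huc, huneg⟩ := keyneg x hx hz hW
    have hev : ∀ᶠ y in 𝓝[>] x, w x ≤ w y := (hmin.filter_mono nhdsWithin_le_nhds)
    obtain ⟨u2, hu2, hsub2⟩ := mem_nhdsGT_iff_exists_Ioo_subset.mp hev
    set y := (x + min u u2) / 2 with hy
    have hxmin : x < min u u2 := lt_min hxu hu2
    have hxy : x < y := by simp only [hy]; linarith
    have hyu : y < min u u2 := by simp only [hy]; linarith
    have hwxy : w y < w x := by
      apply mvt_neg x ⟨hx.1.le, hx.2⟩ u hxu huc huneg y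
        ⟨hxy, lt_of_lt_of_le hyu (min_le_left _ _)⟩
    have : w x ≤ w y := hsub2 ⟨hxy, lt_of_lt_of_le hyu (min_le_right _ _)⟩
    linarith
  -- main argument
  intro x0 hx0
  by_contra hcon; push_neg at hcon
  have hw0 : 0 ≤ w x0 := by simp only [hwdef]; linarith
  have hwl : w (-c) = 0 := by simp only [hwdef]; rw [hl]; ring
  have hwr : w c = 0 := by simp only [hwdef]; rw [hr]; ring
  obtain ⟨m0, hm0s, hm0⟩ := isCompact_Icc.exists_isMaxOn (Set.nonempty_Icc.mpr hcc.le) hwc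
  obtain ⟨m, hm, hmax⟩ : ∃ m ∈ Set.Ioo (-c) c, IsMaxOn w s m := by
    by_cases hMM : w m0 ≤ w x0
    · exact ⟨x0, hx0, fun y hy => le_trans (hm0 hy) hMM⟩
    · push_neg at hMM
      refine ⟨m0, ⟨?_, ?_⟩, hm0⟩
      · rcases lt_or_eq_of_le hm0s.1 with h | h
        · exact h
        · exfalso
          have h9 : w m0 = 0 := by rw [← h]; exact hwl
          rw [h9] at hMM; linarith
      · rcases lt_or_eq_of_le hm0s.2 with h | h
        · exact h
        · exfalso
          have h9 : w m0 = 0 := by rw [h]; exact hwr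
          rw [h9] at hMM; linarith
  have hκm := LM1 m hm (hmax.isLocalMax (hmem m hm))
  have hwm : 0 ≤ w m := le_trans hw0 (hmax (Ioo_subset_Icc_self hx0))
  have hsubm : Set.Icc (-c) m ⊆ s := Set.Icc_subset_Icc le_rfl hm.2.le
  obtain ⟨μ, hμs, hμ⟩ := isCompact_Icc.exists_isMinOn (Set.nonempty_Icc.mpr hm.1.le)
    (hwc.mono hsubm)
  by_cases hν : w μ < 0
  · have hμIoo : μ ∈ Set.Ioo (-c) m := by
      constructor
      · rcases lt_or_eq_of_le hμs.1 with h | h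
        · exact h
        · exfalso
          have h9 : w μ = 0 := by rw [← h]; exact hwl
          rw [h9] at hν; linarith
      · rcases lt_or_eq_of_le hμs.2 with h | h
        · exact h
        · exfalso; rw [h] at hν; linarith
    have hloc : IsLocalMin w μ := hμ.isLocalMin (Icc_mem_nhds hμIoo.1 hμIoo.2)
    have hμI : μ ∈ Set.Ioo (-c) c := ⟨hμIoo.1, hμIoo.2.trans hm.2⟩
    have h2 := LM2 μ hμI hloc
    have h3 := hκmono μ hμI m hm hμIoo.2
    linarith [hκm.2, h2.2]
  · push_neg at hν
    have hge : ∀ z ∈ Set.Icc (-c) m, 0 ≤ w z := fun z hz => le_trans hν (hμ hz)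
    by_cases hzex : ∃ z ∈ Set.Ioo (-c) m, w z ≤ 0
    · obtain ⟨z, hzI, hz0⟩ := hzex
      have hzmin : IsMinOn w (Set.Icc (-c) m) z := by
        intro y hy
        have h1 := hge z (Ioo_subset_Icc_self hzI)
        have h2 := hge y hy
        simp only [Set.mem_setOf_eq]; linarith
      have hloc : IsLocalMin w z := hzmin.isLocalMin (Icc_mem_nhds hzI.1 hzI.2)
      have hzI2 : z ∈ Set.Ioo (-c) c := ⟨hzI.1, hzI.2.trans hm.2⟩
      have h2 := LM2 z hzI2 hloc
      have h3 := hκmono z hzI2 m hm hzI.2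
      linarith [hκm.2, h2.2]
    · push_neg at hzex
      -- hard case : w > 0 on (-c, m), tangency at -c
      have hκend2 : κ (-c) < K := by
        set u := (-c + m)/2 with hu
        have huI : u ∈ Set.Ioo (-c) m := ⟨by simp only [hu]; linarith [hm.1], by simp only [hu]; linarith [hm.1]⟩
        have huI2 : u ∈ Set.Ioo (-c) c := ⟨huI.1, huI.2.trans hm.2⟩
        exact lt_of_le_of_lt (hκend u huI2)
          (lt_of_lt_of_le (hκmono u huI2 m hm huI.2) hκm.2)
      have hw1end : w1 (-c) = 0 := by
        show f1 (-c) - G' (-c) = 0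
        rw [hT]; ring
      have hW1 : HasDerivWithinAt w1 (f2 (-c) - G'' (-c)) s (-c) := by
        have h1 : HasDerivWithinAt f1 (f2 (-c)) s (-c) := by
          have := (hf1diff (-c) hmcs).hasDerivWithinAt
          rwa [← hf2def] at this
        exact h1.sub ((hGd2 (-c) hmcs).hasDerivWithinAt)
      have hWneg : f2 (-c) - G'' (-c) < 0 := by
        have hG'mc : G' (-c) = f1 (-c) := hT.symm
        have h2 : G'' (-c) = K * (1 + f1 (-c) ^ 2) ^ ((3:ℝ)/2) := by
          rw [hGK (-c) hmcs, hG'mc]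
        have h1 : f2 (-c) = κ (-c) * (1 + f1 (-c) ^ 2) ^ ((3:ℝ)/2) := by
          rw [hκdef]; field_simp
        rw [h1, h2]
        nlinarith [rpow32_pos (one_add_sq_pos (f1 (-c)))]
      -- extract an interval on which w1 < 0
      have hslope := hW1
      rw [hasDerivWithinAt_iff_tendsto_slope] at hslope
      have h1 : ∀ᶠ z in 𝓝[s \ {-c}] (-c), slope w1 (-c) z < 0 :=
        hslope.eventually (gt_mem_nhds hWneg)
      have h2 : ∀ᶠ z in 𝓝[Set.Ioo (-c) c] (-c), slope w1 (-c) z < 0 := by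
        apply h1.filter_mono
        apply nhdsWithin_mono
        intro z hz
        exact ⟨Ioo_subset_Icc_self hz, fun h => absurd (h ▸ hz.1) (lt_irrefl _)⟩
      have hIooIoi : 𝓝[Set.Ioo (-c) c] (-c) = 𝓝[>] (-c) := by
        have : Set.Ioo (-c) c = Set.Ioi (-c) ∩ Set.Iio c := by
          ext t; simp [Set.mem_Ioo, Set.mem_Ioi, Set.mem_Iio, and_comm]
        rw [this]
        exact nhdsWithin_inter_of_mem' (mem_nhdsWithin_of_mem_nhds (Iio_mem_nhds hcc))
      rw [hIooIoi] at h2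
      have h3 : ∀ᶠ z in 𝓝[>] (-c), w1 z < 0 := by
        filter_upwards [h2, self_mem_nhdsWithin] with z hz1 hz2
        rw [slope_def_field, hw1end, sub_zero] at hz1
        have hzx : 0 < z - (-c) := by simp only [Set.mem_Ioi] at hz2; linarith
        have := mul_neg_of_neg_of_pos hz1 hzx
        rwa [div_mul_cancel₀ _ (ne_of_gt hzx)] at this
      obtain ⟨u, hu, hsub⟩ := mem_nhdsGT_iff_exists_Ioo_subset.mp h3
      set u' := min u m with hu'
      have hcu' : -c < u' := lt_min hu hm.1
      have hy : (-c + u')/2 ∈ Set.Ioo (-c) u' := ⟨by linarith, by linarith⟩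
      have hneg : ∀ z ∈ Set.Ioo (-c) u', w1 z < 0 := fun z hz =>
        hsub ⟨hz.1, lt_of_lt_of_le hz.2 (min_le_left _ _)⟩
      have hwy : w ((-c + u')/2) < w (-c) :=
        mvt_neg (-c) ⟨le_rfl, hcc⟩ u' hcu' (le_trans (min_le_right _ _) hm.2.le) hneg _ hy
      rw [hwl] at hwy
      have hyIoo : (-c + u')/2 ∈ Set.Ioo (-c) m :=
        ⟨hy.1, lt_of_lt_of_le hy.2 (min_le_right _ _)⟩
      have := hzex _ hyIoo
      linarith

private lemma arc_eq {c φ : ℝ} (hc : 0 < c) (hcos : 0 < Real.cos φ)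
    (hsin : Real.sin φ ≠ 0) {x : ℝ} (hx : x ^ 2 * Real.sin φ ^ 2 ≤ c ^ 2) :
    arcA c φ x = (Real.sqrt (c ^ 2 - x ^ 2 * Real.sin φ ^ 2) - c * Real.cos φ) / Real.sin φ := by
  have hX : (0:ℝ) ≤ c ^ 2 - x ^ 2 * Real.sin φ ^ 2 := by linarith
  have hsq : Real.sqrt (c ^ 2 - x ^ 2 * Real.sin φ ^ 2) ^ 2
      = c ^ 2 - x ^ 2 * Real.sin φ ^ 2 := Real.sq_sqrt hX
  have hsqnn : 0 ≤ Real.sqrt (c ^ 2 - x ^ 2 * Real.sin φ ^ 2) := Real.sqrt_nonneg _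
  have hden : 0 < c * Real.cos φ + Real.sqrt (c ^ 2 - x ^ 2 * Real.sin φ ^ 2) := by
    have : 0 < c * Real.cos φ := mul_pos hc hcos
    linarith
  rw [arcA, div_eq_div_iff (ne_of_gt hden) hsin]
  nlinarith [Real.sin_sq_add_cos_sq φ, hsq]

lemma lens_upper (c : ℝ) (hc : 0 < c) (f : ℝ → ℝ)
    (hf : ContDiffOn ℝ 2 f (Set.Icc (-c) c))
    (hfl : f (-c) = 0) (hfr : f c = 0)
    (hmono : StrictMonoOn (graphCurvature f) (Set.Icc (-c) c)) :
    ∀ x ∈ Set.Ioo (-c) c, f x < arcA c (Real.arctan (deriv f (-c))) x := by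
  have hcc : -c < c := by linarith
  have hmcs : -c ∈ Set.Icc (-c) c := Set.left_mem_Icc.mpr hcc.le
  set d := deriv f (-c) with hd
  set φ := Real.arctan d with hφdef
  have hmonoIoo : StrictMonoOn (graphCurvature f) (Set.Ioo (-c) c) :=
    hmono.mono Set.Ioo_subset_Icc_self
  set m := derivWithin f (Set.Icc (-c) c) (-c) with hm
  have harc0 : ∀ x, arcA c 0 x = 0 := by
    intro x; rw [arcA]; simp
  by_cases hT : d = m
  · -- tangency holds
    have htan : Real.tan φ = d := Real.tan_arctan d
    by_cases hsin : Real.sin φ = 0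
    · -- φ = 0, flat chord
      have hd0 : d = 0 := by
        rw [← htan, Real.tan_eq_sin_div_cos, hsin, zero_div]
      have hφ0 : φ = 0 := by rw [hφdef, hd0, Real.arctan_zero]
      intro x hx
      rw [hφ0, harc0 x]
      exact lens_core c hc f (fun _ => 0) (fun _ => 0) (fun _ => 0) 0 hf
        (fun y _ => hasDerivAt_const y 0) (fun y _ => hasDerivAt_const y 0)
        (fun y _ => by norm_num)
        (by rw [hfl]) (by rw [hfr])
        (by rw [← hm, ← hT, hd0]) hmonoIoo x hx
    · -- genuine circular arc
      have hφI := Real.arctan_mem_Ioo d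
      have hcos : 0 < Real.cos φ := Real.cos_pos_of_mem_Ioo ⟨hφI.1, hφI.2⟩
      set sφ := Real.sin φ with hsφ
      have hs2 : sφ ^ 2 < 1 := by nlinarith [Real.sin_sq_add_cos_sq φ]
      set X : ℝ → ℝ := fun x => c ^ 2 - x ^ 2 * sφ ^ 2 with hX
      have hXpos : ∀ x ∈ Set.Icc (-c) c, 0 < X x := by
        intro x hx
        have hx2 : x ^ 2 ≤ c ^ 2 := sq_le_sq' hx.1 hx.2
        have h1 : x ^ 2 * sφ ^ 2 ≤ c ^ 2 * sφ ^ 2 :=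
          mul_le_mul_of_nonneg_right hx2 (sq_nonneg _)
        have h2 : c ^ 2 * sφ ^ 2 < c ^ 2 := mul_lt_of_lt_one_right (by positivity) hs2
        simp only [hX]; linarith
      set G : ℝ → ℝ := fun x => (Real.sqrt (X x) - c * Real.cos φ) / sφ with hG
      set G' : ℝ → ℝ := fun x => -(x * sφ) / Real.sqrt (X x) with hG'
      set G'' : ℝ → ℝ := fun x => -(sφ * c ^ 2) / (Real.sqrt (X x)) ^ 3 with hG''
      have hsqrt_pos : ∀ x ∈ Set.Icc (-c) c, 0 < Real.sqrt (X x) :=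
        fun x hx => Real.sqrt_pos.mpr (hXpos x hx)
      have hXd : ∀ x : ℝ, HasDerivAt X (-(2 * x * sφ ^ 2)) x := by
        intro x
        have h1 : HasDerivAt (fun y : ℝ => y ^ 2 * sφ ^ 2) (2 * x * sφ ^ 2) x := by
          have := (hasDerivAt_pow 2 x).mul_const (sφ ^ 2)
          simpa using this
        exact h1.const_sub (c ^ 2)
      have hsqd : ∀ x ∈ Set.Icc (-c) c,
          HasDerivAt (fun y => Real.sqrt (X y)) (-(2 * x * sφ ^ 2) / (2 * Real.sqrt (X x))) x :=
        fun x hx => (hXd x).sqrt (ne_of_gt (hXpos x hx))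
      have hGd : ∀ x ∈ Set.Icc (-c) c, HasDerivAt G (G' x) x := by
        intro x hx
        have h2 := ((hsqd x hx).sub_const (c * Real.cos φ)).div_const sφ
        refine h2.congr_deriv (Eq.symm ?_)
        have hsq := hsqrt_pos x hx
        simp only [hG']
        field_simp
      have hGd2 : ∀ x ∈ Set.Icc (-c) c, HasDerivAt G' (G'' x) x := by
        intro x hx
        have hsq := hsqrt_pos x hx
        have hss : Real.sqrt (X x) ^ 2 = X x := Real.sq_sqrt (hXpos x hx).le
        have h2 : HasDerivAt (fun y : ℝ => -(y * sφ)) (-sφ) x := by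
          have := ((hasDerivAt_id x).mul_const sφ).neg
          rw [one_mul] at this; exact this
        have h3 := h2.div (hsqd x hx) (ne_of_gt hsq)
        refine h3.congr_deriv (Eq.symm ?_)
        have hss' : Real.sqrt (X x) ^ 2 = c ^ 2 - x ^ 2 * sφ ^ 2 := by
          rw [hss]
        simp only [hG'']
        field_simp
        linear_combination hss'
      have hGK : ∀ x ∈ Set.Icc (-c) c,
          G'' x = (-(sφ / c)) * (1 + G' x ^ 2) ^ ((3:ℝ)/2) := by
        intro x hx
        have hsq := hsqrt_pos x hx
        have hss : Real.sqrt (X x) ^ 2 = X x := Real.sq_sqrt (hXpos x hx).le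
        have hss' : Real.sqrt (X x) ^ 2 = c ^ 2 - x ^ 2 * sφ ^ 2 := by
          rw [hss]
        have h1 : 1 + G' x ^ 2 = (c / Real.sqrt (X x)) ^ 2 := by
          simp only [hG']
          field_simp
          linear_combination hss'
        have hcq : 0 < c / Real.sqrt (X x) := div_pos hc hsq
        have h2 : ((c / Real.sqrt (X x)) ^ 2 : ℝ) ^ ((3:ℝ)/2) = (c / Real.sqrt (X x)) ^ 3 := by
          rw [← Real.rpow_natCast (c / Real.sqrt (X x)) 2, ← Real.rpow_mul hcq.le]
          norm_num
        rw [h1, h2]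
        simp only [hG'']
        rw [div_pow]
        field_simp
      have hXc : X c = (c * Real.cos φ) ^ 2 := by
        simp only [hX]
        nlinarith [Real.sin_sq_add_cos_sq φ]
      have hXmc : X (-c) = (c * Real.cos φ) ^ 2 := by
        simp only [hX, neg_sq]
        nlinarith [Real.sin_sq_add_cos_sq φ]
      have hccos : (0:ℝ) ≤ c * Real.cos φ := (mul_pos hc hcos).le
      have hsqc : Real.sqrt (X c) = c * Real.cos φ := by rw [hXc, Real.sqrt_sq hccos]
      have hsqmc : Real.sqrt (X (-c)) = c * Real.cos φ := by rw [hXmc, Real.sqrt_sq hccos]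
      have hGc0 : G c = 0 := by simp only [hG]; rw [hsqc, sub_self, zero_div]
      have hGmc0 : G (-c) = 0 := by simp only [hG]; rw [hsqmc, sub_self, zero_div]
      have hG'mc : G' (-c) = d := by
        simp only [hG']
        rw [hsqmc, ← htan, Real.tan_eq_sin_div_cos]
        rw [div_eq_div_iff (by positivity) (ne_of_gt hcos)]
        ring
      have hcore := lens_core c hc f G G' G'' (-(sφ / c)) hf hGd hGd2 hGK
        (by rw [hfl, hGmc0]) (by rw [hfr, hGc0])
        (by rw [hG'mc, ← hm, ← hT]) hmonoIoo
      intro x hx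
      have hxs : x ^ 2 * sφ ^ 2 ≤ c ^ 2 := by
        have := hXpos x (Set.Ioo_subset_Icc_self hx)
        simp only [hX] at this; linarith
      have harc : arcA c φ x = G x := arc_eq hc hcos hsin hxs
      rw [harc]
      exact hcore x hx
  · -- junk case : f not differentiable at -c
    have hndiff : ¬ DifferentiableAt ℝ f (-c) := by
      intro h
      exact hT (by rw [hd, hm, h.derivWithin (uniqueDiffOn_Icc hcc (-c) hmcs)])
    have hd0 : d = 0 := by rw [hd]; exact deriv_zero_of_not_differentiableAt hndiff
    have hm0 : m ≠ 0 := fun h => hT (by rw [hd0, h])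
    have hne : (𝓝[Set.Ioo (-c) c] (-c)).NeBot := by
      apply mem_closure_iff_nhdsWithin_neBot.mp
      rw [closure_Ioo (ne_of_lt hcc)]
      exact hmcs
    have hndiff2 : ¬ DifferentiableAt ℝ (deriv f) (-c) := by
      intro h
      have hval : deriv f (-c) = 0 := by rw [← hd, hd0]
      have hcd1 : ContDiffOn ℝ 1 (derivWithin f (Set.Icc (-c) c)) (Set.Icc (-c) c) :=
        hf.derivWithin (uniqueDiffOn_Icc hcc) (by norm_num)
      have hf1c : ContinuousWithinAt (derivWithin f (Set.Icc (-c) c)) (Set.Icc (-c) c) (-c) :=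
        hcd1.continuousOn (-c) hmcs
      have h1 : Filter.Tendsto (deriv f) (𝓝[Set.Ioo (-c) c] (-c)) (𝓝 m) := by
        apply Filter.Tendsto.congr' _
          (hf1c.mono_left (nhdsWithin_mono _ Set.Ioo_subset_Icc_self))
        filter_upwards [self_mem_nhdsWithin] with y hy
        exact derivWithin_of_mem_nhds (Icc_mem_nhds hy.1 hy.2)
      have h2 : Filter.Tendsto (deriv f) (𝓝[Set.Ioo (-c) c] (-c)) (𝓝 0) := by
        rw [← hval]
        exact (h.continuousAt.tendsto).mono_left nhdsWithin_le_nhds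
      exact hm0 (tendsto_nhds_unique h1 h2)
    have hκ0 : graphCurvature f (-c) = 0 := by
      rw [graphCurvature, deriv_zero_of_not_differentiableAt hndiff2, zero_div]
    have hpos : ∀ x ∈ Set.Ioo (-c) c, 0 < deriv (deriv f) x := by
      intro x hx
      have h1 : graphCurvature f (-c) < graphCurvature f x :=
        hmono hmcs (Set.Ioo_subset_Icc_self hx) hx.1
      rw [hκ0, graphCurvature] at h1
      have h2 : (0:ℝ) < (1 + deriv f x ^ 2) ^ ((3:ℝ)/2) :=
        rpow32_pos (one_add_sq_pos _)
      by_contra hcon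
      push_neg at hcon
      have := div_nonpos_of_nonpos_of_nonneg hcon h2.le
      linarith
    have hconv : StrictConvexOn ℝ (Set.Icc (-c) c) f := by
      apply strictConvexOn_of_deriv2_pos (convex_Icc _ _) hf.continuousOn
      intro x hx
      rw [interior_Icc] at hx
      have h9 : deriv^[2] f x = deriv (deriv f) x := by
        simp [Function.iterate_succ, Function.iterate_zero]
      rw [h9]
      exact hpos x hx
    intro x hx
    have hφ0 : φ = 0 := by rw [hφdef, hd0, Real.arctan_zero]
    rw [hφ0, harc0 x]
    have ha : (0:ℝ) < (c - x) / (2 * c) := by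
      apply div_pos; linarith [hx.2]; linarith
    have hb : (0:ℝ) < (x + c) / (2 * c) := by
      apply div_pos; linarith [hx.1]; linarith
    have hc0 : c ≠ 0 := ne_of_gt hc
    have hab : (c - x) / (2 * c) + (x + c) / (2 * c) = 1 := by
      field_simp; ring
    have hcomb := hconv.2 hmcs (Set.right_mem_Icc.mpr hcc.le) (by intro h; linarith)
      ha hb hab
    simp only [smul_eq_mul] at hcomb
    have hxeq : (c - x) / (2 * c) * (-c) + (x + c) / (2 * c) * c = x := by
      field_simp; ring
    rw [hxeq, hfl, hfr] at hcomb
    simpa using hcomb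


private lemma lens_deriv_reflect (f : ℝ → ℝ) (x : ℝ) :
    deriv (fun y => -f (-y)) x = deriv f (-x) := by
  by_cases h : DifferentiableAt ℝ f (-x)
  · have h1 : HasDerivAt (fun y => -f (-y)) (deriv f (-x)) x := by
      have h3 := (h.hasDerivAt.comp x (hasDerivAt_neg x)).neg
      have h4 : HasDerivAt (fun y => -f (-y)) (-(deriv f (-x) * -1)) x := h3
      rwa [mul_neg_one, neg_neg] at h4
    exact h1.deriv
  · have h2 : ¬ DifferentiableAt ℝ (fun y => -f (-y)) x := by
      intro hd
      apply h
      have hd' : DifferentiableAt ℝ (fun y => -f (-y)) (-(-x)) := by rw [neg_neg]; exact hd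
      have h6 := (hd'.comp (-x) (differentiable_neg.differentiableAt)).neg
      have h7 : DifferentiableAt ℝ (fun z => -(-f (-(-z)))) (-x) := h6
      simpa using h7
    rw [deriv_zero_of_not_differentiableAt h, deriv_zero_of_not_differentiableAt h2]

private lemma lens_deriv_comp_neg (h : ℝ → ℝ) (x : ℝ) :
    deriv (fun y => h (-y)) x = -deriv h (-x) := by
  by_cases hd : DifferentiableAt ℝ h (-x)
  · have h1 : HasDerivAt (fun y => h (-y)) (deriv h (-x) * (-1)) x := by
      have := hd.hasDerivAt.comp x (hasDerivAt_neg x)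
      exact this
    rw [h1.deriv]; ring
  · have h2 : ¬ DifferentiableAt ℝ (fun y => h (-y)) x := by
      intro hdd
      apply hd
      have hd' : DifferentiableAt ℝ (fun y => h (-y)) (-(-x)) := by rw [neg_neg]; exact hdd
      have h6 := hd'.comp (-x) (differentiable_neg.differentiableAt)
      have h7 : ((fun y => h (-y)) ∘ (fun z : ℝ => -z)) = h := by
        funext z; simp
      rwa [h7] at h6
    rw [deriv_zero_of_not_differentiableAt h2, deriv_zero_of_not_differentiableAt hd, neg_zero]

private lemma graphCurvature_reflect (f : ℝ → ℝ) (x : ℝ) :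
    graphCurvature (fun y => -f (-y)) x = -graphCurvature f (-x) := by
  have h1 : deriv (fun y => -f (-y)) = fun y => deriv f (-y) := by
    funext y; exact lens_deriv_reflect f y
  rw [graphCurvature, graphCurvature, h1, lens_deriv_comp_neg (deriv f) x]
  rw [neg_div]


/-- Lens theorem for a spiral arc with strictly increasing curvature:
`A(x; c, −β) < f(x) < A(x; c, α)` for `|x| < c`. -/
theorem lens_theorem_increasing (c : ℝ) (hc : 0 < c) (f : ℝ → ℝ)
    (hf : ContDiffOn ℝ 2 f (Set.Icc (-c) c))
    (hfl : f (-c) = 0) (hfr : f c = 0)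
    (hmono : StrictMonoOn (graphCurvature f) (Set.Icc (-c) c)) :
    ∀ x : ℝ, |x| < c →
      arcA c (-Real.arctan (deriv f c)) x < f x ∧
      f x < arcA c (Real.arctan (deriv f (-c))) x := by
  intro x hx
  rw [abs_lt] at hx
  have hxI : x ∈ Set.Ioo (-c) c := ⟨hx.1, hx.2⟩
  constructor
  · -- lower bound via reflection
    have hmapsTo : Set.MapsTo (fun y : ℝ => -y) (Set.Icc (-c) c) (Set.Icc (-c) c) := by
      intro y hy
      constructor <;> simp only [Set.mem_Icc] at hy ⊢ <;> linarith [hy.1, hy.2]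
    have hgc : ContDiffOn ℝ 2 (fun y : ℝ => -f (-y)) (Set.Icc (-c) c) := by
      apply ContDiffOn.neg
      exact hf.comp (contDiff_neg.contDiffOn) hmapsTo
    have hgl : (fun y : ℝ => -f (-y)) (-c) = 0 := by simp [hfr]
    have hgr : (fun y : ℝ => -f (-y)) c = 0 := by simp [hfl]
    have hgmono : StrictMonoOn (graphCurvature (fun y : ℝ => -f (-y))) (Set.Icc (-c) c) := by
      intro a ha b hb hab
      rw [graphCurvature_reflect, graphCurvature_reflect]
      simp only [Set.mem_Icc] at ha hb
      have h9 := hmono (show -b ∈ Set.Icc (-c) c from Set.mem_Icc.mpr ⟨by linarith [hb.2], by linarith [hb.1]⟩)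
        (show -a ∈ Set.Icc (-c) c from Set.mem_Icc.mpr ⟨by linarith [ha.2], by linarith [ha.1]⟩)
        (show -b < -a by linarith)
      linarith
    have h := lens_upper c hc (fun y : ℝ => -f (-y)) hgc hgl hgr hgmono (-x)
      ⟨by linarith, by linarith⟩
    have hder : deriv (fun y : ℝ => -f (-y)) (-c) = deriv f c := by
      rw [lens_deriv_reflect f (-c), neg_neg]
    rw [hder] at h
    simp only [neg_neg] at h
    -- h : -f x < arcA c (arctan (deriv f c)) (-x)
    have heven : arcA c (Real.arctan (deriv f c)) (-x) = arcA c (Real.arctan (deriv f c)) x := by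
      simp only [arcA, neg_sq]
    have hodd : arcA c (-Real.arctan (deriv f c)) x = -arcA c (Real.arctan (deriv f c)) x := by
      simp only [arcA, Real.sin_neg, Real.cos_neg, neg_sq, mul_neg, neg_div]
    rw [hodd]
    rw [heven] at h
    linarith
  · exact lens_upper c hc f hf hfl hfr hmono x hxI

end LensAux
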